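/- Let y, δ ∈ ℝᵈ, t, λ > 0 with t ≥ ‖y‖ and λ ≥ ‖δ‖. If tλ + ⟨y, δ⟩ ≤ μ, then ‖t·δ + λ·y‖ ≤ √(2tλμ). -/

import Mathlib

open scoped RealInnerProductSpace

/-- Second-order-cone near-complementarity bound for the pair ((t,y),(λ,δ)). -/
theorem socp_pair_bound {d : ℕ} (t lam μ : ℝ) (y δ : EuclideanSpace ℝ (Fin d))
    (htpos : 0 < t) (hlampos : 0 < lam)
    (ht : ‖y‖ ≤ t) (hδ : ‖δ‖ ≤ lam)
    (hgap : t * lam + (inner ℝ y δ : ℝ) ≤ μ) :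
    ‖t • δ + lam • y‖ ≤ Real.sqrt (2 * t * lam * μ) := by
  have hsq : ‖t • δ + lam • y‖ ^ 2 ≤ 2 * t * lam * μ := by
    have hexp : ‖t • δ + lam • y‖ ^ 2
        = t ^ 2 * ‖δ‖ ^ 2 + 2 * (t * lam * (inner ℝ y δ : ℝ)) + lam ^ 2 * ‖y‖ ^ 2 := by
      rw [norm_add_sq_real, norm_smul, norm_smul, real_inner_smul_left,
        real_inner_smul_right, real_inner_comm]
      simp [abs_of_pos htpos, abs_of_pos hlampos]
      ring
    have h1 : t ^ 2 * ‖δ‖ ^ 2 ≤ t ^ 2 * lam ^ 2 := by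
      have : ‖δ‖ ^ 2 ≤ lam ^ 2 := by nlinarith [norm_nonneg δ]
      nlinarith [sq_nonneg t]
    have h2 : lam ^ 2 * ‖y‖ ^ 2 ≤ lam ^ 2 * t ^ 2 := by
      have : ‖y‖ ^ 2 ≤ t ^ 2 := by nlinarith [norm_nonneg y]
      nlinarith [sq_nonneg lam]
    nlinarith [mul_pos htpos hlampos]
  calc ‖t • δ + lam • y‖ = Real.sqrt (‖t • δ + lam • y‖ ^ 2) := by
        rw [Real.sqrt_sq (norm_nonneg _)]
    _ ≤ Real.sqrt (2 * t * lam * μ) := Real.sqrt_le_sqrt hsq
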